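/- Let A > 0 > B be real numbers with A > |B|, set B' := |B|, and let p ≥ 1. Then for all real t, s: |tA − sB'|^p ≥ (|t|^p·A − |s|^p·B')·(A − B')^{p−1}. -/

import Mathlib

/-- Key inequality of the nodal domain theorem: let `A > 0 > B` with `A > |B|`, set `B' = |B|`,
and `p ≥ 1`. Then for all real `t, s`:
`|tA − sB'|^p ≥ (|t|^p·A − |s|^p·B')·(A − B')^{p−1}`. -/
theorem stmt_17 (p A B : ℝ) (hp : 1 ≤ p) (hA : 0 < A) (hB : B < 0) (hAB : |B| < A) :
    ∀ t s : ℝ, (abs (t * A - s * |B|)) ^ p ≥ (|t| ^ p * A - |s| ^ p * |B|) * (A - |B|) ^ (p - 1) := by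
  intro t s
  set B' := |B| with hB'def
  have hB'pos : 0 < B' := abs_pos.mpr (ne_of_lt hB)
  have hC : 0 < A - B' := sub_pos.mpr hAB
  set C := A - B' with hCdef
  set x := |t| with hxdef
  set y := |s| with hydef
  have hx : 0 ≤ x := abs_nonneg t
  have hy : 0 ≤ y := abs_nonneg s
  have hp0 : 0 ≤ p := le_trans zero_le_one hp
  have hCp : 0 ≤ C ^ (p - 1) := Real.rpow_nonneg hC.le _
  rcases le_or_gt (x * A) (y * B') with h | h
  · -- RHS is nonpositive
    have h1 : x ^ p * A ≤ y ^ p * B' := by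
      have hxle : x ≤ y * B' / A := (le_div_iff₀ hA).mpr h
      have h2 : x ^ p ≤ (y * B' / A) ^ p := Real.rpow_le_rpow hx hxle hp0
      have h3 : (y * B' / A) ^ p = y ^ p * (B' / A) ^ p := by
        rw [mul_div_assoc, Real.mul_rpow hy (by positivity)]
      have h4 : (B' / A) ^ p ≤ B' / A := by
        have := Real.rpow_le_rpow_of_exponent_ge (by positivity)
          ((div_le_one hA).mpr hAB.le) hp
        simpa using this
      calc x ^ p * A ≤ (y ^ p * (B' / A) ^ p) * A := by
            rw [← h3]; exact mul_le_mul_of_nonneg_right h2 hA.le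
        _ ≤ (y ^ p * (B' / A)) * A := by
            have : y ^ p * (B' / A) ^ p ≤ y ^ p * (B' / A) :=
              mul_le_mul_of_nonneg_left h4 (Real.rpow_nonneg hy p)
            exact mul_le_mul_of_nonneg_right this hA.le
        _ = y ^ p * B' := by field_simp
    have hRHS : (x ^ p * A - y ^ p * B') * C ^ (p - 1) ≤ 0 :=
      mul_nonpos_of_nonpos_of_nonneg (by linarith) hCp
    exact le_trans hRHS (Real.rpow_nonneg (abs_nonneg _) p)
  · -- main case: z := x*A - y*B' > 0
    set z := x * A - y * B' with hzdef
    have hz : 0 < z := sub_pos.mpr h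
    have habsA : |A| = A := abs_of_pos hA
    have habsB' : |B'| = B' := abs_of_pos hB'pos
    have hle : z ≤ |t * A - s * B'| := by
      have := abs_sub_abs_le_abs_sub (t * A) (s * B')
      rwa [abs_mul, abs_mul, habsA, habsB'] at this
    have hLHS : z ^ p ≤ (|t * A - s * B'|) ^ p :=
      Real.rpow_le_rpow hz.le hle hp0
    -- convexity of rpow
    have hw1 : (0:ℝ) ≤ B' / A := by positivity
    have hw2 : (0:ℝ) ≤ C / A := by positivity
    have hw12 : B' / A + C / A = 1 := by rw [hCdef]; field_simp; ring
    have hconv := (convexOn_rpow hp).2 (Set.mem_Ici.mpr hy)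
      (Set.mem_Ici.mpr (le_of_lt (div_pos hz hC))) hw1 hw2 hw12
    simp only [smul_eq_mul] at hconv
    have hcomb : B' / A * y + C / A * (z / C) = x := by
      field_simp
      ring
    rw [hcomb] at hconv
    have hdiv : (z / C) ^ p = z ^ p / C ^ p := Real.div_rpow hz.le hC.le p
    -- from hconv : x ^ p ≤ B'/A • y^p + C/A • (z/C)^p
    have key : x ^ p * A - y ^ p * B' ≤ z ^ p * C ^ (1 - p) := by
      have h5 : C / A * (z ^ p / C ^ p) = z ^ p * C ^ (1 - p) / A := by
        rw [Real.rpow_sub hC, Real.rpow_one]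
        field_simp
      have h6 : x ^ p ≤ B' / A * y ^ p + z ^ p * C ^ (1 - p) / A := by
        rw [← h5, ← hdiv]
        simpa using hconv
      have h7 : x ^ p * A ≤ B' * y ^ p + z ^ p * C ^ (1 - p) := by
        have := mul_le_mul_of_nonneg_right h6 hA.le
        calc x ^ p * A ≤ (B' / A * y ^ p + z ^ p * C ^ (1 - p) / A) * A := this
          _ = B' * y ^ p + z ^ p * C ^ (1 - p) := by field_simp
      linarith
    have final : (x ^ p * A - y ^ p * B') * C ^ (p - 1) ≤ z ^ p := by
      have := mul_le_mul_of_nonneg_right key hCp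
      have hCC : C ^ (1 - p) * C ^ (p - 1) = 1 := by
        rw [← Real.rpow_add hC]; norm_num
      calc (x ^ p * A - y ^ p * B') * C ^ (p - 1)
          ≤ z ^ p * C ^ (1 - p) * C ^ (p - 1) := this
        _ = z ^ p := by rw [mul_assoc, hCC, mul_one]
    exact le_trans final hLHS
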